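/- For all integers m ≥ 1, l, s, all h, h', x ∈ ℤ/mℤ: γ^l_h(x,−x)^{−1}·χ^l_{h',s}(h,−x) = conj(χ^l_{h',s}(h,x)). (This is the identity (S⁻¹_*χ_ρ)(x,h) = γ_h(x,x⁻¹)^{−1}·χ_ρ(h,x⁻¹) = conj(χ_ρ(h,x)) for the S-transformation of the mapping class group action, specialized to Γ = ℤ/mℤ.) -/

import Mathlib

/-- `ζ_n = exp(2πi/n)`. -/
noncomputable def zetaC (n : ℕ) : ℂ := Complex.exp (2 * Real.pi * Complex.I / n)

/-- The 3-cocycle `ω_l(x,y,z) = ζ_m^{l·x̃·⌊(ỹ+z̃)/m⌋}` on `ℤ/mℤ`. -/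
noncomputable def omegaL (m : ℕ) (l : ℤ) (x y z : ZMod m) : ℂ :=
  zetaC m ^ (l * (x.val : ℤ) * (((y.val + z.val) / m : ℕ) : ℤ))

/-- `γ^l_h(x,y) = ω_l(h,x,y)·ω_l(x,y,h)/ω_l(x,h,y)`. -/
noncomputable def gammaL (m : ℕ) (l : ℤ) (h x y : ZMod m) : ℂ :=
  omegaL m l h x y * omegaL m l x y h / omegaL m l x h y

/-- The irreducible character `χ^l_{h,s}` of the twisted quantum double `D^{ω_l}(ℤ/mℤ)`. -/
noncomputable def chiL (m : ℕ) (l : ℤ) (h : ZMod m) (s : ℤ) (x y : ZMod m) : ℂ :=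
  if x = h then zetaC (m ^ 2) ^ ((l * (h.val : ℤ) + m * s) * (y.val : ℤ)) else 0

lemma zetaC_ne_zero (n : ℕ) : zetaC n ≠ 0 := Complex.exp_ne_zero _

lemma zetaC_pow_self (n : ℕ) (hn : 1 ≤ n) : zetaC n ^ (n : ℤ) = 1 := by
  have hn0 : (n : ℂ) ≠ 0 := Nat.cast_ne_zero.mpr (by omega)
  rw [zpow_natCast, zetaC, ← Complex.exp_nat_mul, show (n : ℂ) * (2 * Real.pi * Complex.I / n)
    = 2 * Real.pi * Complex.I by field_simp, Complex.exp_two_pi_mul_I]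

lemma zetaC_sq_pow (m : ℕ) (hm : 1 ≤ m) : zetaC (m ^ 2) ^ (m : ℤ) = zetaC m := by
  have hn0 : (m : ℂ) ≠ 0 := Nat.cast_ne_zero.mpr (by omega)
  rw [zpow_natCast, zetaC, zetaC, ← Complex.exp_nat_mul]
  congr 1
  push_cast
  field_simp

lemma conj_zetaC (n : ℕ) : (starRingEnd ℂ) (zetaC n) = (zetaC n)⁻¹ := by
  rw [zetaC, ← Complex.exp_conj, ← Complex.exp_neg]
  congr 1
  simp only [div_eq_mul_inv, map_mul, Complex.conj_I, map_inv₀, map_ofNat,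
    Complex.conj_ofReal, map_natCast]
  ring

lemma conj_zetaC_zpow (n : ℕ) (k : ℤ) :
    (starRingEnd ℂ) (zetaC n ^ k) = zetaC n ^ (-k) := by
  rw [map_zpow₀, conj_zetaC, inv_zpow, ← zpow_neg]

theorem statement7 (m : ℕ) (hm : 1 ≤ m) (l s : ℤ) (h h' x : ZMod m) :
    (gammaL m l h x (-x))⁻¹ * chiL m l h' s h (-x) =
      (starRingEnd ℂ) (chiL m l h' s h x) := by
  haveI : NeZero m := ⟨by omega⟩
  have ho : omegaL m l x h (-x) ≠ 0 := zpow_ne_zero _ (zetaC_ne_zero m)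
  have hgamma : gammaL m l h x (-x) = omegaL m l h x (-x) := by
    rw [gammaL, show omegaL m l x (-x) h = omegaL m l x h (-x) by
      rw [omegaL, omegaL, Nat.add_comm], mul_div_assoc, div_self ho, mul_one]
  rw [hgamma, chiL, chiL]
  by_cases hh : h = h'
  · subst hh
    rw [if_pos rfl, if_pos rfl, conj_zetaC_zpow]
    by_cases hx : x = 0
    · simp [hx, omegaL, Nat.div_eq_of_lt (show 0 < m by omega)]
    · have hneg : (-x).val = m - x.val := by rw [ZMod.neg_val, if_neg hx]
      have hxv : 0 < x.val := Nat.pos_of_ne_zero fun h0 => hx ((ZMod.val_eq_zero x).mp h0)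
      have hxlt : x.val < m := ZMod.val_lt x
      rw [omegaL, hneg, show (x.val + (m - x.val)) / m = 1 by
        rw [Nat.add_sub_cancel' hxlt.le, Nat.div_self (by omega)]]
      set A : ℤ := l * (h.val : ℤ) + m * s with hA
      have hcast : ((m - x.val : ℕ) : ℤ) = (m : ℤ) - x.val := by
        push_cast [Nat.cast_sub hxlt.le]; ring
      have key : zetaC (m ^ 2) ^ ((m : ℤ) * A) = zetaC m ^ A := by
        rw [zpow_mul, zetaC_sq_pow m hm]
      have key3 : zetaC m ^ ((m : ℤ) * s) = 1 := by
        rw [zpow_mul, zetaC_pow_self m hm, one_zpow]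
      rw [Nat.cast_one, mul_one, hcast,
        show A * ((m : ℤ) - x.val) = (m : ℤ) * A + -(A * x.val) by ring,
        zpow_add₀ (zetaC_ne_zero _), key, hA,
        zpow_add₀ (zetaC_ne_zero _), key3, mul_one, ← mul_assoc,
        inv_mul_cancel₀ (zpow_ne_zero _ (zetaC_ne_zero _)), one_mul]
  · simp [hh]
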